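/- For every n ≥ 0: x_{n;θ} = (2/θ)·E[(X₁(n) − θ/2)²] = u_{n;θ} + v_{n;θ} + 2((1−θ)/θ)·w_{n;θ}, and consequently x_{n;θ} ≥ 0. -/

import Mathlib

open Finset Filter

namespace Broadcast

/-- The root distribution `π = (θ/2, θ/2, (1-θ)/2, (1-θ)/2)`. -/
noncomputable def rootDist (θ : ℝ) (i : Fin 4) : ℝ :=
  if (i : ℕ) < 2 then θ / 2 else (1 - θ) / 2

/-- The transition matrix `P i j = λ · 1{i=j} + (1-λ) π_j`. -/
noncomputable def trans (θ lam : ℝ) (i j : Fin 4) : ℝ :=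
  (if i = j then lam else 0) + (1 - lam) * rootDist θ j

/-- Vertices at level `n` of the infinite rooted `d`-ary tree, encoded as paths. -/
abbrev Vtx (d n : ℕ) := Fin n → Fin d

/-- Configurations (assignments of states) on level `n`. -/
abbrev Config (d n : ℕ) := Vtx d n → Fin 4

/-- Restriction of a level-`(n+1)` configuration to the subtree of the `j`-th child
of the root. -/
def restrict {d n : ℕ} (j : Fin d) (A : Config d (n + 1)) : Config d n :=
  fun p => A (Fin.cons j p)

/-- `lik θ λ d n i A` is the probability of observing the configuration `A` on level `n`,
given that the root is in state `i` (the broadcasting process). -/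
noncomputable def lik (θ lam : ℝ) (d : ℕ) : (n : ℕ) → Fin 4 → Config d n → ℝ
  | 0, i, A => if A Fin.elim0 = i then 1 else 0
  | n + 1, i, A =>
      ∏ j : Fin d, ∑ k : Fin 4, trans θ lam i k * lik θ lam d n k (restrict j A)

/-- Unconditional probability of observing the configuration `A` on level `n`. -/
noncomputable def marg (θ lam : ℝ) (d n : ℕ) (A : Config d n) : ℝ :=
  ∑ i : Fin 4, rootDist θ i * lik θ lam d n i A

/-- The posterior `f_n(i, A) = P(σ_ρ = i ∣ σ(n) = A)`. -/
noncomputable def post (θ lam : ℝ) (d n : ℕ) (i : Fin 4) (A : Config d n) : ℝ :=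
  rootDist θ i * lik θ lam d n i A / marg θ lam d n A

/-- Expectation of `g(σ(n))` conditioned on the root being in state `r`,
i.e. `E g(σ^r(n))`. -/
noncomputable def condE (θ lam : ℝ) (d n : ℕ) (r : Fin 4) (g : Config d n → ℝ) : ℝ :=
  ∑ A : Config d n, lik θ lam d n r A * g A

/-- Unconditional expectation of `g(σ(n))`. -/
noncomputable def uncondE (θ lam : ℝ) (d n : ℕ) (g : Config d n → ℝ) : ℝ :=
  ∑ A : Config d n, marg θ lam d n A * g A

/-- `x_{n;θ} = E f_n(1, σ¹(n)) - θ/2`. -/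
noncomputable def xT (θ lam : ℝ) (d n : ℕ) : ℝ :=
  condE θ lam d n 0 (fun A => post θ lam d n 0 A) - θ / 2

/-- `y_{n;θ} = E f_n(2, σ¹(n)) - θ/2`. -/
noncomputable def yT (θ lam : ℝ) (d n : ℕ) : ℝ :=
  condE θ lam d n 0 (fun A => post θ lam d n 1 A) - θ / 2

/-- `z_{n;θ} = E f_n(1, σ³(n)) - θ/2`. -/
noncomputable def zT (θ lam : ℝ) (d n : ℕ) : ℝ :=
  condE θ lam d n 2 (fun A => post θ lam d n 0 A) - θ / 2

/-- `x_{n;1-θ} = E f_n(3, σ³(n)) - (1-θ)/2`. -/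
noncomputable def xH (θ lam : ℝ) (d n : ℕ) : ℝ :=
  condE θ lam d n 2 (fun A => post θ lam d n 2 A) - (1 - θ) / 2

/-- `y_{n;1-θ} = E f_n(4, σ³(n)) - (1-θ)/2`. -/
noncomputable def yH (θ lam : ℝ) (d n : ℕ) : ℝ :=
  condE θ lam d n 2 (fun A => post θ lam d n 3 A) - (1 - θ) / 2

/-- `z_{n;1-θ} = E f_n(3, σ¹(n)) - (1-θ)/2`. -/
noncomputable def zH (θ lam : ℝ) (d n : ℕ) : ℝ :=
  condE θ lam d n 0 (fun A => post θ lam d n 2 A) - (1 - θ) / 2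

/-- `u_{n;θ} = E (f_n(1, σ¹(n)) - θ/2)²`. -/
noncomputable def uT (θ lam : ℝ) (d n : ℕ) : ℝ :=
  condE θ lam d n 0 (fun A => (post θ lam d n 0 A - θ / 2) ^ 2)

/-- `v_{n;θ} = E (f_n(2, σ¹(n)) - θ/2)²`. -/
noncomputable def vT (θ lam : ℝ) (d n : ℕ) : ℝ :=
  condE θ lam d n 0 (fun A => (post θ lam d n 1 A - θ / 2) ^ 2)

/-- `w_{n;θ} = E (f_n(1, σ³(n)) - θ/2)²`. -/
noncomputable def wT (θ lam : ℝ) (d n : ℕ) : ℝ :=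
  condE θ lam d n 2 (fun A => (post θ lam d n 0 A - θ / 2) ^ 2)

/-- `w_{n;1-θ} = E (f_n(3, σ¹(n)) - (1-θ)/2)²`. -/
noncomputable def wH (θ lam : ℝ) (d n : ℕ) : ℝ :=
  condE θ lam d n 0 (fun A => (post θ lam d n 2 A - (1 - θ) / 2) ^ 2)

/-- `Y_{ij}(n) = f_n(i, σ_j(n+1))`, viewed as a function of the level-`(n+1)`
configuration. -/
noncomputable def Yf (θ lam : ℝ) (d n : ℕ) (i : Fin 4) (j : Fin d)
    (A : Config d (n + 1)) : ℝ :=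
  post θ lam d n i (restrict j A)

/-- `Z_i(n)`, viewed as a function of the level-`(n+1)` configuration. -/
noncomputable def Zf (θ lam : ℝ) (d n : ℕ) (i : Fin 4) (A : Config d (n + 1)) : ℝ :=
  if (i : ℕ) < 2 then
    ∏ j : Fin d, (1 + (2 * lam / θ) * (Yf θ lam d n i j A - θ / 2))
  else
    ∏ j : Fin d, (1 + (2 * lam / (1 - θ)) * (Yf θ lam d n i j A - (1 - θ) / 2))

/-- `S = (θ/2)Z₁ + (θ/2)Z₂ + ((1-θ)/2)Z₃ + ((1-θ)/2)Z₄`. -/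
noncomputable def Sf (θ lam : ℝ) (d n : ℕ) (A : Config d (n + 1)) : ℝ :=
  θ / 2 * Zf θ lam d n 0 A + θ / 2 * Zf θ lam d n 1 A
    + (1 - θ) / 2 * Zf θ lam d n 2 A + (1 - θ) / 2 * Zf θ lam d n 3 A

/-- Total variation distance between the laws of `σ^i(n)` and `σ^j(n)`. -/
noncomputable def dTV (θ lam : ℝ) (d n : ℕ) (i j : Fin 4) : ℝ :=
  (∑ A : Config d n, |lik θ lam d n i A - lik θ lam d n j A|) / 2

/-- The model is reconstructible if for some pair of root states the total variation
distance between the conditioned level-`n` configurations does not vanish. -/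
def Reconstructible (θ lam : ℝ) (d : ℕ) : Prop :=
  ∃ i j : Fin 4, 0 < Filter.limsup (fun n => dTV θ lam d n i j) Filter.atTop

/-- Probability that the root is in state `i` and the states at the vertices
`v 1, …, v k ∈ L(M)` are `c 1, …, c k`. -/
noncomputable def jointRootEvent (θ lam : ℝ) (d M k : ℕ) (v : Fin k → Vtx d M)
    (c : Fin k → Fin 4) (i : Fin 4) : ℝ :=
  ∑ A : Config d M,
    if ∀ t, A (v t) = c t then rootDist θ i * lik θ lam d M i A else 0

/-- Conditional probability `P(σ_ρ = i ∣ σ_{v t} = c t, 1 ≤ t ≤ k)`. -/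
noncomputable def condRoot (θ lam : ℝ) (d M k : ℕ) (v : Fin k → Vtx d M)
    (c : Fin k → Fin 4) (i : Fin 4) : ℝ :=
  jointRootEvent θ lam d M k v c i / ∑ i' : Fin 4, jointRootEvent θ lam d M k v c i'


section Aux

variable (θ lam : ℝ) (d : ℕ)

lemma finv2 : ((2 : Fin 4) : ℕ) = 2 := rfl
lemma finv3 : ((3 : Fin 4) : ℕ) = 3 := rfl

lemma rootDist_sum : ∑ i : Fin 4, rootDist θ i = 1 := by
  simp only [Fin.sum_univ_four, rootDist, finv2, finv3]
  norm_num
  ring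

lemma trans_sum (i : Fin 4) : ∑ j : Fin 4, trans θ lam i j = 1 := by
  unfold trans
  rw [Finset.sum_add_distrib, Finset.sum_ite_eq, ← Finset.mul_sum, rootDist_sum θ]
  simp only [Finset.mem_univ, if_true, mul_one]
  ring

lemma lik_nonneg (hP : ∀ i j : Fin 4, 0 ≤ trans θ lam i j) :
    ∀ (n : ℕ) (i : Fin 4) (A : Config d n), 0 ≤ lik θ lam d n i A := by
  intro n
  induction n with
  | zero => intro i A; simp only [lik]; positivity
  | succ n ih =>
      intro i A
      simp only [lik]
      refine Finset.prod_nonneg fun j _ => Finset.sum_nonneg fun k _ => ?_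
      exact mul_nonneg (hP i k) (ih k _)

/-- Level-`(n+1)` configurations are tuples of level-`n` configurations. -/
def configEquiv (d n : ℕ) : Config d (n + 1) ≃ (Fin d → Config d n) where
  toFun A j := restrict j A
  invFun B p := B (p 0) (Fin.tail p)
  left_inv A := by
    funext p
    simp only [restrict]
    congr 1
    exact Fin.cons_self_tail p
  right_inv B := by
    funext j p
    simp [restrict, Fin.tail_cons]

lemma sum_prod_restrict {n : ℕ} (F : Fin d → Config d n → ℝ) :
    ∑ A : Config d (n + 1), ∏ j : Fin d, F j (restrict j A)
      = ∏ j : Fin d, ∑ B : Config d n, F j B := by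
  rw [Finset.prod_univ_sum]
  rw [Fintype.piFinset_univ]
  exact Equiv.sum_comp (configEquiv d n) (fun B => ∏ j, F j (B j))

lemma lik_sum_one : ∀ (n : ℕ) (i : Fin 4), ∑ A : Config d n, lik θ lam d n i A = 1 := by
  intro n
  induction n with
  | zero =>
      intro i
      rw [← (Equiv.funUnique (Vtx d 0) (Fin 4)).symm.sum_comp
        (fun A : Config d 0 => lik θ lam d 0 i A)]
      simp [lik, Equiv.funUnique]
  | succ n ih =>
      intro i
      simp only [lik]
      rw [sum_prod_restrict d
        (fun j B => ∑ k : Fin 4, trans θ lam i k * lik θ lam d n k B)]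
      have : ∀ j : Fin d,
          ∑ B : Config d n, ∑ k : Fin 4, trans θ lam i k * lik θ lam d n k B = 1 := by
        intro j
        rw [Finset.sum_comm]
        simp_rw [← Finset.mul_sum]
        simp [ih, trans_sum θ lam i]
      rw [Finset.prod_congr rfl fun j _ => this j, Finset.prod_const_one]

lemma rootDist_pos (hθ : θ ∈ Set.Ioo (0 : ℝ) 1) (i : Fin 4) : 0 < rootDist θ i := by
  obtain ⟨h0, h1⟩ := hθ
  unfold rootDist
  split <;> linarith

lemma marg_nonneg (hθ : θ ∈ Set.Ioo (0 : ℝ) 1) (hP : ∀ i j : Fin 4, 0 ≤ trans θ lam i j)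
    (n : ℕ) (A : Config d n) : 0 ≤ marg θ lam d n A :=
  Finset.sum_nonneg fun i _ =>
    mul_nonneg (rootDist_pos θ hθ i).le (lik_nonneg θ lam d hP n i A)

lemma post_mul_marg (hθ : θ ∈ Set.Ioo (0 : ℝ) 1) (hP : ∀ i j : Fin 4, 0 ≤ trans θ lam i j)
    (n : ℕ) (i : Fin 4) (A : Config d n) :
    post θ lam d n i A * marg θ lam d n A = rootDist θ i * lik θ lam d n i A := by
  by_cases h : marg θ lam d n A = 0
  · have hz : ∀ k : Fin 4, rootDist θ k * lik θ lam d n k A = 0 := by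
      have := (Finset.sum_eq_zero_iff_of_nonneg
        (fun k _ => mul_nonneg (rootDist_pos θ hθ k).le (lik_nonneg θ lam d hP n k A))).mp h
      exact fun k => this k (Finset.mem_univ k)
    have : lik θ lam d n i A = 0 := by
      have := hz i
      rcases mul_eq_zero.mp this with h' | h'
      · exact absurd h' (rootDist_pos θ hθ i).ne'
      · exact h'
    simp [post, h, this]
  · unfold post
    rw [div_mul_cancel₀ _ h]

lemma lik_perm (e : Fin 4 ≃ Fin 4) (he : ∀ j, rootDist θ (e j) = rootDist θ j) :
    ∀ (n : ℕ) (i : Fin 4) (A : Config d n),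
      lik θ lam d n (e i) (fun v => e (A v)) = lik θ lam d n i A := by
  have ht : ∀ i j, trans θ lam (e i) (e j) = trans θ lam i j := by
    intro i j
    simp [trans, he, Equiv.apply_eq_iff_eq]
  intro n
  induction n with
  | zero =>
      intro i A
      simp [lik, Equiv.apply_eq_iff_eq]
  | succ n ih =>
      intro i A
      simp only [lik]
      refine Finset.prod_congr rfl fun j _ => ?_
      rw [← Equiv.sum_comp e (fun k => trans θ lam (e i) k
        * lik θ lam d n k (restrict j fun v => e (A v)))]
      refine Finset.sum_congr rfl fun k _ => ?_
      have hr : restrict j (fun v => e (A v)) = fun p => e (restrict j A p) := rfl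
      rw [ht i k, hr, ih k (restrict j A)]

lemma marg_perm (e : Fin 4 ≃ Fin 4) (he : ∀ j, rootDist θ (e j) = rootDist θ j)
    (n : ℕ) (A : Config d n) :
    marg θ lam d n (fun v => e (A v)) = marg θ lam d n A := by
  unfold marg
  rw [← Equiv.sum_comp e (fun i => rootDist θ i * lik θ lam d n i (fun v => e (A v)))]
  refine Finset.sum_congr rfl fun i _ => ?_
  rw [he i, lik_perm θ lam d e he n i A]

lemma post_perm (e : Fin 4 ≃ Fin 4) (he : ∀ j, rootDist θ (e j) = rootDist θ j)
    (n : ℕ) (i : Fin 4) (A : Config d n) :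
    post θ lam d n (e i) (fun v => e (A v)) = post θ lam d n i A := by
  unfold post
  rw [he i, lik_perm θ lam d e he n i A, marg_perm θ lam d e he n A]

lemma condE_post_perm (e : Fin 4 ≃ Fin 4) (he : ∀ j, rootDist θ (e j) = rootDist θ j)
    (n : ℕ) (r i : Fin 4) (c : ℝ) :
    condE θ lam d n (e r) (fun A => (post θ lam d n (e i) A - c) ^ 2)
      = condE θ lam d n r (fun A => (post θ lam d n i A - c) ^ 2) := by
  unfold condE
  refine (Fintype.sum_equiv ((Equiv.refl (Vtx d n)).arrowCongr e) _ _ fun A => ?_).symm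
  show lik θ lam d n r A * (post θ lam d n i A - c) ^ 2
      = lik θ lam d n (e r) (fun v => e (A v))
        * (post θ lam d n (e i) (fun v => e (A v)) - c) ^ 2
  rw [lik_perm θ lam d e he n r A, post_perm θ lam d e he n i A]

end Aux


/-- `x_{n;θ} = (2/θ)·E(X₁(n) - θ/2)² = u_{n;θ} + v_{n;θ} + 2((1-θ)/θ)w_{n;θ}`,
and consequently `x_{n;θ} ≥ 0`. -/
theorem xT_eq_and_nonneg (θ lam : ℝ) (hθ : θ ∈ Set.Ioo (0 : ℝ) 1) (hlam : |lam| ≤ 1)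
    (hP : ∀ i j : Fin 4, 0 ≤ trans θ lam i j) (d : ℕ) (hd : 2 ≤ d) (n : ℕ) :
    xT θ lam d n
        = (2 / θ) * uncondE θ lam d n (fun A => (post θ lam d n 0 A - θ / 2) ^ 2) ∧
    xT θ lam d n
        = uT θ lam d n + vT θ lam d n + 2 * ((1 - θ) / θ) * wT θ lam d n ∧
    0 ≤ xT θ lam d n := by
  obtain ⟨hθ0, hθ1⟩ := hθ
  have hθne : θ ≠ 0 := hθ0.ne'
  have hr0 : rootDist θ 0 = θ / 2 := by simp [rootDist]
  have hpm := post_mul_marg θ lam d ⟨hθ0, hθ1⟩ hP n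
  -- key sums
  have hmargsum : ∑ A : Config d n, marg θ lam d n A = 1 := by
    unfold marg
    rw [Finset.sum_comm]
    simp_rw [← Finset.mul_sum]
    simp [lik_sum_one θ lam d n, rootDist_sum θ]
  have hmargpost : ∑ A : Config d n, marg θ lam d n A * post θ lam d n 0 A = θ / 2 := by
    calc ∑ A : Config d n, marg θ lam d n A * post θ lam d n 0 A
        = ∑ A : Config d n, rootDist θ 0 * lik θ lam d n 0 A := by
          refine Finset.sum_congr rfl fun A _ => ?_
          rw [mul_comm, hpm 0 A]
      _ = θ / 2 := by
          rw [← Finset.mul_sum, lik_sum_one θ lam d n 0, hr0, mul_one]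
  have hC : θ / 2 * condE θ lam d n 0 (fun A => post θ lam d n 0 A)
      = ∑ A : Config d n, marg θ lam d n A * (post θ lam d n 0 A) ^ 2 := by
    unfold condE
    rw [Finset.mul_sum]
    refine Finset.sum_congr rfl fun A _ => ?_
    have : θ / 2 * lik θ lam d n 0 A = post θ lam d n 0 A * marg θ lam d n A := by
      rw [hpm 0 A, hr0]
    calc θ / 2 * (lik θ lam d n 0 A * post θ lam d n 0 A)
        = (θ / 2 * lik θ lam d n 0 A) * post θ lam d n 0 A := by ring
      _ = (post θ lam d n 0 A * marg θ lam d n A) * post θ lam d n 0 A := by rw [this]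
      _ = marg θ lam d n A * (post θ lam d n 0 A) ^ 2 := by ring
  have hU : uncondE θ lam d n (fun A => (post θ lam d n 0 A - θ / 2) ^ 2)
      = θ / 2 * condE θ lam d n 0 (fun A => post θ lam d n 0 A) - θ ^ 2 / 4 := by
    unfold uncondE
    have expand : ∀ A : Config d n,
        marg θ lam d n A * (post θ lam d n 0 A - θ / 2) ^ 2
          = marg θ lam d n A * (post θ lam d n 0 A) ^ 2
            - θ * (marg θ lam d n A * post θ lam d n 0 A)
            + θ ^ 2 / 4 * marg θ lam d n A := fun A => by ring
    rw [Finset.sum_congr rfl fun A _ => expand A]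
    rw [Finset.sum_add_distrib, Finset.sum_sub_distrib, ← Finset.mul_sum, ← Finset.mul_sum,
      hmargpost, hmargsum, hC]
    ring
  have h1 : xT θ lam d n
      = (2 / θ) * uncondE θ lam d n (fun A => (post θ lam d n 0 A - θ / 2) ^ 2) := by
    unfold xT
    rw [hU]
    field_simp
    ring
  refine ⟨h1, ?_, ?_⟩
  · -- second identity via symmetry
    have hs01 : ∀ j : Fin 4, (((Equiv.swap (0 : Fin 4) 1) j : Fin 4) : ℕ) < 2 ↔ (j : ℕ) < 2 := by
      decide
    have hs23 : ∀ j : Fin 4, (((Equiv.swap (2 : Fin 4) 3) j : Fin 4) : ℕ) < 2 ↔ (j : ℕ) < 2 := by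
      decide
    have he01 : ∀ j, rootDist θ ((Equiv.swap (0 : Fin 4) 1) j) = rootDist θ j := by
      intro j
      unfold rootDist
      simp only [hs01 j]
    have he23 : ∀ j, rootDist θ ((Equiv.swap (2 : Fin 4) 3) j) = rootDist θ j := by
      intro j
      unfold rootDist
      simp only [hs23 j]
    have hv : condE θ lam d n 1 (fun A => (post θ lam d n 0 A - θ / 2) ^ 2)
        = vT θ lam d n := by
      have := condE_post_perm θ lam d (Equiv.swap (0 : Fin 4) 1) he01 n 0 1 (θ / 2)
      simpa [vT, Equiv.swap_apply_left, Equiv.swap_apply_right] using this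
    have hw3 : condE θ lam d n 3 (fun A => (post θ lam d n 0 A - θ / 2) ^ 2)
        = wT θ lam d n := by
      have h0 : (Equiv.swap (2 : Fin 4) 3) 0 = 0 := by decide
      have := condE_post_perm θ lam d (Equiv.swap (2 : Fin 4) 3) he23 n 2 0 (θ / 2)
      rw [Equiv.swap_apply_left, h0] at this
      exact this
    have hsplit : uncondE θ lam d n (fun A => (post θ lam d n 0 A - θ / 2) ^ 2)
        = ∑ i : Fin 4, rootDist θ i
            * condE θ lam d n i (fun A => (post θ lam d n 0 A - θ / 2) ^ 2) := by
      unfold uncondE marg condE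
      simp only [Finset.sum_mul, Finset.mul_sum]
      rw [Finset.sum_comm]
      simp only [mul_assoc]
    rw [h1, hsplit, Fin.sum_univ_four, hv, hw3]
    have hr1 : rootDist θ 1 = θ / 2 := by simp [rootDist]
    have hr2 : rootDist θ 2 = (1 - θ) / 2 := by simp [rootDist, finv2]
    have hr3 : rootDist θ 3 = (1 - θ) / 2 := by simp [rootDist, finv3]
    rw [hr0, hr1, hr2, hr3]
    unfold uT wT
    field_simp
    ring
  · rw [h1]
    have hnn : 0 ≤ uncondE θ lam d n (fun A => (post θ lam d n 0 A - θ / 2) ^ 2) :=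
      Finset.sum_nonneg fun A _ =>
        mul_nonneg (marg_nonneg θ lam d ⟨hθ0, hθ1⟩ hP n A) (sq_nonneg _)
    positivity


end Broadcast
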